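/- For n ≥ 2 and m ≥ 4, the graph C_{2n}(K_m^-) satisfies sn(C_{2n}(K_m^-)) = (m − 3)n + 1. -/

import Mathlib

open SimpleGraph

/-- `C₀` is a Sudoku coloring of `G` on the vertex set `S`, with colors in `Fin k`:
there is exactly one proper `k`-coloring of `G` that restricts to `C₀` on `S`.
(Note that such a `C₀` is automatically a proper coloring of the induced subgraph `G[S]`.) -/
def IsSudokuColoring {V : Type*} (G : SimpleGraph V) (k : ℕ) (S : Set V)
    (C₀ : V → Fin k) : Prop :=
  ∃! c : G.Coloring (Fin k), ∀ v ∈ S, c v = C₀ v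

/-- The Sudoku number of a finite graph `G`: the minimum cardinality of a set `S` of
vertices carrying a Sudoku coloring of `G` (with `k = χ(G)` colors). -/
noncomputable def sudokuNumber {V : Type*} [Fintype V] (G : SimpleGraph V) : ℕ :=
  sInf {n | ∃ (S : Finset V) (C₀ : V → Fin G.chromaticNumber.toNat),
    IsSudokuColoring G G.chromaticNumber.toNat S C₀ ∧ S.card = n}

/-- The graph `C_{2n}(K_m^-)`, obtained from `C_{2n}(K_m)` (the cycle
`C_{2n} = x_1 x_2 ⋯ x_{2n} x_1` with each alternate edge `x_{2i-1} x_{2i}` identified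
with an edge of a distinct copy of `K_m`) by deleting the `n` edges `x_{2i-1} x_{2i}`.
The vertex `(i, a)` is the `a`-th vertex of the `i`-th copy of `K_m`, with
`x_{2i-1} = (i, 0)` and `x_{2i} = (i, 1)`; two vertices are adjacent iff they lie in
the same copy and are not the pair `{x_{2i-1}, x_{2i}}`, or they are `x_{2i}` and
`x_{2i+1}` (indices mod `2n`). -/
def cycleKminus (n m : ℕ) : SimpleGraph (Fin n × Fin m) :=
  SimpleGraph.fromRel fun x y =>
    (x.1 = y.1 ∧ (2 ≤ (x.2 : ℕ) ∨ 2 ≤ (y.2 : ℕ))) ∨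
    ((y.1 : ℕ) = ((x.1 : ℕ) + 1) % n ∧ (x.2 : ℕ) = 1 ∧ (y.2 : ℕ) = 0)

namespace CKM

lemma adj_iff' {n m : ℕ} {i j : Fin n} {a b : Fin m} :
    (cycleKminus n m).Adj (i, a) (j, b) ↔
      (i = j ∧ a ≠ b ∧ (2 ≤ (a : ℕ) ∨ 2 ≤ (b : ℕ))) ∨
      ((j : ℕ) = ((i : ℕ) + 1) % n ∧ (a : ℕ) = 1 ∧ (b : ℕ) = 0) ∨
      ((i : ℕ) = ((j : ℕ) + 1) % n ∧ (b : ℕ) = 1 ∧ (a : ℕ) = 0) := by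
  simp only [cycleKminus, fromRel_adj]
  constructor
  · rintro ⟨hne, (⟨h1, h2⟩ | h) | (⟨h1, h2⟩ | h)⟩
    · exact Or.inl ⟨h1, fun hab => hne (by rw [h1, hab]), h2⟩
    · exact Or.inr (Or.inl h)
    · exact Or.inl ⟨h1.symm, fun hab => hne (by rw [h1.symm, hab]), h2.symm⟩
    · exact Or.inr (Or.inr h)
  · rintro (⟨rfl, h2, h3⟩ | ⟨h1, h2, h3⟩ | ⟨h1, h2, h3⟩)
    · exact ⟨fun h => h2 (congrArg Prod.snd h), Or.inl (Or.inl ⟨rfl, h3⟩)⟩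
    · refine ⟨fun h => ?_, Or.inl (Or.inr ⟨h1, h2, h3⟩)⟩
      have := congrArg (fun p => ((Prod.snd p : Fin m) : ℕ)) h; simp at this; omega
    · refine ⟨fun h => ?_, Or.inr (Or.inr ⟨h1, h2, h3⟩)⟩
      have := congrArg (fun p => ((Prod.snd p : Fin m) : ℕ)) h; simp at this; omega

lemma adj_same {n m : ℕ} {i : Fin n} {a b : Fin m} (hab : a ≠ b)
    (h : 2 ≤ (a : ℕ) ∨ 2 ≤ (b : ℕ)) : (cycleKminus n m).Adj (i, a) (i, b) :=
  adj_iff'.2 (Or.inl ⟨rfl, hab, h⟩)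

lemma val_add_one {n : ℕ} [NeZero n] (hn : 2 ≤ n) (i : Fin n) :
    ((i + 1 : Fin n) : ℕ) = ((i : ℕ) + 1) % n := by
  rw [Fin.add_def]
  show ((i : ℕ) + ((1 : Fin n) : ℕ)) % n = _
  rw [Fin.val_one', Nat.mod_eq_of_lt (show 1 < n by omega)]

lemma adj_cross {n m : ℕ} [NeZero n] (hn : 2 ≤ n) (i : Fin n) {a b : Fin m}
    (ha : (a : ℕ) = 1) (hb : (b : ℕ) = 0) :
    (cycleKminus n m).Adj (i, a) (i + 1, b) :=
  adj_iff'.2 (Or.inr (Or.inl ⟨val_add_one hn i, ha, hb⟩))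

end CKM

namespace CKM

open Finset

lemma card_filter_val (m : ℕ) (P : ℕ → Prop) [DecidablePred P] :
    (Finset.univ.filter fun a : Fin m => P (a : ℕ)).card
      = ((Finset.range m).filter P).card := by
  refine Finset.card_bij (fun (a : Fin m) _ => (a : ℕ)) ?_ ?_ ?_
  · intro a ha
    rw [Finset.mem_filter] at ha
    simp only [mem_filter, mem_range]
    exact ⟨a.isLt, ha.2⟩
  · intro a _ b _ h
    exact Fin.ext h
  · intro v hv
    simp only [mem_filter, mem_range] at hv
    exact ⟨⟨v, hv.1⟩, by simp [hv.2], rfl⟩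

lemma card_val_interval (m l u : ℕ) :
    (Finset.univ.filter fun a : Fin m => l ≤ (a : ℕ) ∧ (a : ℕ) ≤ u).card
      = min (u+1) m - l := by
  rw [card_filter_val m (fun v => l ≤ v ∧ v ≤ u)]
  have : (Finset.range m).filter (fun v => l ≤ v ∧ v ≤ u) = Finset.Ico l (min (u+1) m) := by
    ext x; simp [Finset.mem_Ico]; omega
  rw [this, Nat.card_Ico]

lemma card_val_ge (m l : ℕ) :
    (Finset.univ.filter fun a : Fin m => l ≤ (a : ℕ)).card = m - l := by
  rw [card_filter_val m (fun v => l ≤ v)]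
  have : (Finset.range m).filter (fun v => l ≤ v) = Finset.Ico l m := by
    ext x; simp [Finset.mem_Ico]; omega
  rw [this, Nat.card_Ico]

end CKM

namespace CKM

open Finset

variable {n m : ℕ}

/-- Image of the "top" vertices (positions `≥ 2`) of copy `i` under a coloring-function. -/
def topImage (f : Fin n × Fin m → Fin (m-1)) (i : Fin n) : Finset (Fin (m-1)) :=
  (Finset.univ.filter fun a : Fin m => 2 ≤ (a : ℕ)).image fun a => f (i, a)

lemma topImage_card (c : (cycleKminus n m).Coloring (Fin (m-1))) (i : Fin n) :
    (topImage (⇑c) i).card = m - 2 := by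
  rw [topImage, Finset.card_image_of_injOn, card_val_ge]
  intro a ha b hb hab
  by_contra hne
  exact c.valid (adj_same hne (Or.inl (by simpa using ha))) hab

lemma not_mem_topImage (c : (cycleKminus n m).Coloring (Fin (m-1))) (i : Fin n)
    {x : Fin m} (hx : (x : ℕ) ≤ 1) : c (i, x) ∉ topImage (⇑c) i := by
  rw [topImage, Finset.mem_image]
  rintro ⟨a, ha, hax⟩
  simp only [mem_filter, mem_univ, true_and] at ha
  have hne : a ≠ x := fun h => by rw [h] at ha; omega
  exact c.valid (adj_same hne (Or.inl ha)) hax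

lemma eq_of_not_mem_topImage (hm : 4 ≤ m) (c : (cycleKminus n m).Coloring (Fin (m-1)))
    (i : Fin n) {γ γ' : Fin (m-1)} (h : γ ∉ topImage (⇑c) i) (h' : γ' ∉ topImage (⇑c) i) :
    γ = γ' := by
  have hc : ((topImage (⇑c) i)ᶜ).card ≤ 1 := by
    rw [Finset.card_compl, topImage_card]
    simp only [Fintype.card_fin]
    omega
  exact Finset.card_le_one.mp hc γ (by simpa using h) γ' (by simpa using h')

lemma block_eq (hm : 4 ≤ m) (c : (cycleKminus n m).Coloring (Fin (m-1))) (i : Fin n)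
    {x y : Fin m} (hx : (x : ℕ) ≤ 1) (hy : (y : ℕ) ≤ 1) : c (i, x) = c (i, y) :=
  eq_of_not_mem_topImage hm c i (not_mem_topImage c i hx) (not_mem_topImage c i hy)

end CKM

namespace CKM

open Finset

variable {n m : ℕ}

/-- Builder for colorings of `cycleKminus`. -/
def mkColoring [NeZero n] (hn : 2 ≤ n) (f : Fin n × Fin m → Fin (m-1))
    (h1 : ∀ (i : Fin n) (a b : Fin m), a ≠ b → 2 ≤ (a : ℕ) ∨ 2 ≤ (b : ℕ) →
      f (i, a) ≠ f (i, b))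
    (h2 : ∀ (i : Fin n) (a b : Fin m), (a : ℕ) = 1 → (b : ℕ) = 0 →
      f (i, a) ≠ f (i + 1, b)) :
    (cycleKminus n m).Coloring (Fin (m-1)) :=
  Coloring.mk f (by
    rintro ⟨i, a⟩ ⟨j, b⟩ hadj
    rcases adj_iff'.1 hadj with ⟨rfl, hab, h⟩ | ⟨hj, ha, hb⟩ | ⟨hi, hb, ha⟩
    · exact h1 _ _ _ hab h
    · have hji : j = i + 1 := Fin.ext (by rw [hj, val_add_one hn])
      rw [hji]
      exact h2 i a b ha hb
    · have hij : i = j + 1 := Fin.ext (by rw [hi, val_add_one hn])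
      rw [hij]
      exact (h2 j b a hb ha).symm)

@[simp] lemma mkColoring_apply [NeZero n] (hn : 2 ≤ n) (f) (h1) (h2) (x : Fin n × Fin m) :
    (mkColoring hn f h1 h2 : _ → Fin (m-1)) x = f x := rfl

/-- A proper coloring of the cycle `C_n` with (at least) 3 colors. -/
def bfun (hm : 4 ≤ m) : Fin n → Fin (m-1) := fun i =>
  if (i : ℕ) = n - 1 ∧ n % 2 = 1 then ⟨2, by omega⟩
  else if (i : ℕ) % 2 = 0 then ⟨0, by omega⟩ else ⟨1, by omega⟩

lemma succ_val_split [NeZero n] (hn : 2 ≤ n) (i : Fin n) :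
    (((i+1 : Fin n)) : ℕ) = (i : ℕ) + 1 ∧ (i : ℕ) < n - 1 ∨
    (((i+1 : Fin n)) : ℕ) = 0 ∧ (i : ℕ) = n - 1 := by
  have hv := i.isLt
  rw [val_add_one hn]
  rcases Nat.lt_or_ge ((i : ℕ) + 1) n with h | h
  · exact Or.inl ⟨Nat.mod_eq_of_lt h, by omega⟩
  · have h' : (i : ℕ) + 1 = n := by omega
    exact Or.inr ⟨by rw [h', Nat.mod_self], by omega⟩

lemma bfun_proper [NeZero n] (hn : 2 ≤ n) (hm : 4 ≤ m) (i : Fin n) :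
    bfun hm i ≠ bfun hm (i + 1) := by
  intro heq
  have hval := congrArg Fin.val heq
  have hs := succ_val_split hn i
  have hv := i.isLt
  revert hval
  unfold bfun
  split_ifs <;> simp <;> omega

end CKM

namespace CKM

open Finset

variable {n m : ℕ}

def sset [NeZero n] (hm : 4 ≤ m) (i : Fin n) : Finset (Fin (m-1)) :=
  Finset.univ \ {bfun hm (i-1), bfun hm i}

lemma bfun_pred_ne [NeZero n] (hn : 2 ≤ n) (hm : 4 ≤ m) (i : Fin n) :
    bfun hm (i-1) ≠ bfun hm i := by
  have h := bfun_proper hn hm (i-1)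
  rwa [sub_add_cancel] at h

lemma scard [NeZero n] (hn : 2 ≤ n) (hm : 4 ≤ m) (i : Fin n) :
    (sset hm i).card = m - 3 := by
  rw [sset, Finset.card_sdiff_of_subset (Finset.subset_univ _), Finset.card_univ, Fintype.card_fin,
    Finset.card_insert_of_notMem (by simp [bfun_pred_ne hn hm i]), Finset.card_singleton]
  omega

lemma bfun_not_mem_sset [NeZero n] (hm : 4 ≤ m) (i : Fin n) : bfun hm i ∉ sset hm i := by
  simp [sset]

lemma bfun_pred_not_mem_sset [NeZero n] (hm : 4 ≤ m) (i : Fin n) :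
    bfun hm (i-1) ∉ sset hm i := by simp [sset]

/-- The color of the `v`-th vertex (for `2 ≤ v ≤ m-2`) in copy `i` of the canonical coloring. -/
def midColor [NeZero n] (hn : 2 ≤ n) (hm : 4 ≤ m) (i : Fin n) (v : ℕ) : Fin (m-1) :=
  ((Finset.orderIsoOfFin (sset hm i) (scard hn hm i)) ⟨min (v-2) (m-4), by omega⟩ : Fin (m-1))

lemma midColor_mem [NeZero n] (hn : 2 ≤ n) (hm : 4 ≤ m) (i : Fin n) (v : ℕ) :
    midColor hn hm i v ∈ sset hm i := Finset.coe_mem _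

lemma midColor_inj [NeZero n] (hn : 2 ≤ n) (hm : 4 ≤ m) (i : Fin n) {v w : ℕ}
    (hv2 : 2 ≤ v) (hv : v ≤ m - 2) (hw2 : 2 ≤ w) (hw : w ≤ m - 2) (hvw : v ≠ w) :
    midColor hn hm i v ≠ midColor hn hm i w := by
  intro heq
  have h1 := (Finset.orderIsoOfFin (sset hm i) (scard hn hm i)).injective
    (Subtype.coe_injective heq)
  rw [Fin.mk.injEq] at h1
  omega

lemma midColor_surj [NeZero n] (hn : 2 ≤ n) (hm : 4 ≤ m) (i : Fin n) {γ : Fin (m-1)}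
    (hγ : γ ∈ sset hm i) : ∃ v : ℕ, 2 ≤ v ∧ v ≤ m - 2 ∧ midColor hn hm i v = γ := by
  obtain ⟨t, ht⟩ := (Finset.orderIsoOfFin (sset hm i) (scard hn hm i)).surjective ⟨γ, hγ⟩
  have htl := t.isLt
  refine ⟨(t : ℕ) + 2, by omega, by omega, ?_⟩
  rw [midColor]
  have h2 : (⟨min ((t:ℕ) + 2 - 2) (m-4), by omega⟩ : Fin (m-3)) = t := Fin.ext (by simp; omega)
  rw [h2, ht]

def cstar [NeZero n] (hn : 2 ≤ n) (hm : 4 ≤ m) : Fin n × Fin m → Fin (m-1) := fun x =>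
  if (x.2 : ℕ) ≤ 1 then bfun hm x.1
  else if (x.2 : ℕ) ≤ m - 2 then midColor hn hm x.1 (x.2 : ℕ)
  else bfun hm (x.1 - 1)

lemma cstar_def [NeZero n] (hn : 2 ≤ n) (hm : 4 ≤ m) (i : Fin n) (a : Fin m) :
    cstar hn hm (i, a) = if (a : ℕ) ≤ 1 then bfun hm i
      else if (a : ℕ) ≤ m - 2 then midColor hn hm i (a : ℕ)
      else bfun hm (i - 1) := rfl

lemma cstar_low [NeZero n] (hn : 2 ≤ n) (hm : 4 ≤ m) {i : Fin n} {a : Fin m}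
    (h : (a : ℕ) ≤ 1) : cstar hn hm (i, a) = bfun hm i := by
  rw [cstar_def, if_pos h]

lemma cstar_mid [NeZero n] (hn : 2 ≤ n) (hm : 4 ≤ m) {i : Fin n} {a : Fin m}
    (h2 : 2 ≤ (a : ℕ)) (h : (a : ℕ) ≤ m - 2) :
    cstar hn hm (i, a) = midColor hn hm i (a : ℕ) := by
  rw [cstar_def, if_neg (by omega), if_pos h]

lemma cstar_last [NeZero n] (hn : 2 ≤ n) (hm : 4 ≤ m) {i : Fin n} {a : Fin m}
    (h : m - 2 < (a : ℕ)) : cstar hn hm (i, a) = bfun hm (i - 1) := by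
  rw [cstar_def, if_neg (by omega), if_neg (by omega)]

end CKM

namespace CKM

open Finset

variable {n m : ℕ}

/-- The canonical proper coloring of `cycleKminus n m`. -/
def Cstar [NeZero n] (hn : 2 ≤ n) (hm : 4 ≤ m) :
    (cycleKminus n m).Coloring (Fin (m-1)) :=
  mkColoring hn (cstar hn hm)
    (by
      intro i a b hab hge
      have ha' := a.isLt
      have hb' := b.isLt
      by_cases ha1 : (a : ℕ) ≤ 1 <;> by_cases hb1 : (b : ℕ) ≤ 1 <;>
        by_cases ha2 : (a : ℕ) ≤ m - 2 <;> by_cases hb2 : (b : ℕ) ≤ m - 2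
      all_goals first
        | omega
        | (rw [cstar_low hn hm ha1, cstar_mid hn hm (by omega) hb2]
           exact fun heq => bfun_not_mem_sset hm i (heq ▸ midColor_mem hn hm i (b : ℕ)))
        | (rw [cstar_low hn hm ha1, cstar_last hn hm (by omega)]
           exact (bfun_pred_ne hn hm i).symm)
        | (rw [cstar_mid hn hm (by omega) ha2, cstar_low hn hm hb1]
           exact fun heq => bfun_not_mem_sset hm i (heq.symm ▸ midColor_mem hn hm i (a : ℕ)))
        | (rw [cstar_mid hn hm (by omega) ha2, cstar_mid hn hm (by omega) hb2]
           exact midColor_inj hn hm i (by omega) ha2 (by omega) hb2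
             (fun h => hab (Fin.ext h)))
        | (rw [cstar_mid hn hm (by omega) ha2, cstar_last hn hm (by omega)]
           exact fun heq => bfun_pred_not_mem_sset hm i (heq ▸ midColor_mem hn hm i (a : ℕ)))
        | (rw [cstar_last hn hm (by omega), cstar_mid hn hm (by omega) hb2]
           exact fun heq => bfun_pred_not_mem_sset hm i (heq.symm ▸ midColor_mem hn hm i (b : ℕ)))
        | (rw [cstar_last hn hm (by omega), cstar_low hn hm hb1]
           exact bfun_pred_ne hn hm i)
        | (exact absurd (Fin.ext (by omega) : a = b) hab))
    (by
      intro i a b ha hb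
      rw [cstar_low hn hm (by omega), cstar_low hn hm (by omega)]
      exact bfun_proper hn hm i)

lemma Cstar_apply [NeZero n] (hn : 2 ≤ n) (hm : 4 ≤ m) (x : Fin n × Fin m) :
    Cstar hn hm x = cstar hn hm x := rfl

lemma not_colorable (hn : 2 ≤ n) (hm : 4 ≤ m) :
    ¬ (cycleKminus n m).Colorable (m-2) := by
  rintro ⟨c⟩
  set pos : Fin (m-1) → Fin m := fun t =>
    if (t : ℕ) = 0 then ⟨0, by omega⟩ else ⟨(t : ℕ) + 1, by omega⟩ with hpos
  have hv : ∀ s : Fin (m-1), ((pos s) : ℕ) = if (s : ℕ) = 0 then 0 else (s : ℕ) + 1 := by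
    intro s; rw [hpos]; split <;> simp_all
  have hinj : Function.Injective (fun t => c (⟨0, by omega⟩, pos t)) := by
    intro t t' h
    by_contra hne
    by_cases ht0 : (t : ℕ) = 0 <;> by_cases ht0' : (t' : ℕ) = 0
    · exact hne (Fin.ext (by omega))
    all_goals {
      have hne2 : pos t ≠ pos t' := by
        intro hp
        have := congrArg Fin.val hp
        rw [hv t, hv t'] at this
        split_ifs at this <;> exact hne (Fin.ext (by omega))
      have hge : 2 ≤ ((pos t) : ℕ) ∨ 2 ≤ ((pos t') : ℕ) := by
        rw [hv t, hv t']
        split_ifs <;> omega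
      exact c.valid (adj_same hne2 hge) h }
  have hcard := Fintype.card_le_of_injective _ hinj
  simp only [Fintype.card_fin] at hcard
  omega

lemma chrom (hn : 2 ≤ n) (hm : 4 ≤ m) :
    (cycleKminus n m).chromaticNumber = ((m-1 : ℕ) : ℕ∞) := by
  haveI : NeZero n := ⟨by omega⟩
  apply le_antisymm
  · exact Colorable.chromaticNumber_le ⟨Cstar hn hm⟩
  · by_contra hlt
    rw [not_le] at hlt
    have hle : (cycleKminus n m).chromaticNumber ≤ ((m-2 : ℕ) : ℕ∞) := by
      have h1 : ((m-1 : ℕ) : ℕ∞) = ((m-2 : ℕ) : ℕ∞) + 1 := by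
        rw [← Nat.cast_add_one]
        congr 1
        omega
      rw [h1] at hlt
      exact (ENat.lt_add_one_iff (by simp)).mp hlt
    exact not_colorable hn hm (chromaticNumber_le_iff_colorable.mp hle)

lemma chrom_toNat (hn : 2 ≤ n) (hm : 4 ≤ m) :
    (cycleKminus n m).chromaticNumber.toNat = m - 1 := by
  rw [chrom hn hm, ENat.toNat_coe]

end CKM

namespace CKM

open Finset

variable {n m : ℕ}

def Sset [NeZero n] (hn : 2 ≤ n) (hm : 4 ≤ m) : Finset (Fin n × Fin m) :=
  (Finset.univ.filter fun x : Fin n × Fin m => 2 ≤ (x.2 : ℕ) ∧ (x.2 : ℕ) ≤ m-2)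
    ∪ {((0 : Fin n), (⟨m-1, by omega⟩ : Fin m))}

lemma mem_Sset [NeZero n] (hn : 2 ≤ n) (hm : 4 ≤ m) {x : Fin n × Fin m} :
    x ∈ Sset hn hm ↔ (2 ≤ (x.2 : ℕ) ∧ (x.2 : ℕ) ≤ m-2) ∨
      x = ((0 : Fin n), (⟨m-1, by omega⟩ : Fin m)) := by
  simp [Sset]
  exact or_comm

lemma Sset_card [NeZero n] (hn : 2 ≤ n) (hm : 4 ≤ m) :
    (Sset hn hm).card = (m-3) * n + 1 := by
  rw [Sset, Finset.card_union_of_disjoint]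
  · have h1 : (Finset.univ.filter fun x : Fin n × Fin m => 2 ≤ (x.2 : ℕ) ∧ (x.2 : ℕ) ≤ m-2)
        = (Finset.univ : Finset (Fin n)) ×ˢ
          (Finset.univ.filter fun a : Fin m => 2 ≤ (a : ℕ) ∧ (a : ℕ) ≤ m-2) := by
      ext ⟨i, a⟩
      simp [Finset.mem_product]
    rw [h1, Finset.card_product, Finset.card_univ, Fintype.card_fin,
      card_val_interval m 2 (m-2), Finset.card_singleton]
    have : min (m-2+1) m = m - 1 := by omega
    rw [this]
    have : m - 1 - 2 = m - 3 := by omega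
    rw [this, Nat.mul_comm]
  · rw [Finset.disjoint_singleton_right, Finset.mem_filter]
    rintro ⟨-, -, h⟩
    simp at h
    omega

section Unique

variable [NeZero n] (hn : 2 ≤ n) (hm : 4 ≤ m)

lemma sset_sub_topImage (c' : (cycleKminus n m).Coloring (Fin (m-1)))
    (hS : ∀ v ∈ Sset hn hm, c' v = cstar hn hm v) (i : Fin n) :
    sset hm i ⊆ topImage (⇑c') i := by
  intro γ hγ
  obtain ⟨v, hv2, hv, heq⟩ := midColor_surj hn hm i hγ
  have hvm : v < m := by omega
  have hmem : (i, (⟨v, hvm⟩ : Fin m)) ∈ Sset hn hm := by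
    rw [mem_Sset hn hm]
    exact Or.inl ⟨hv2, hv⟩
  have : c' (i, (⟨v, hvm⟩ : Fin m)) = γ := by
    rw [hS _ hmem, cstar_mid hn hm (by exact hv2) (by exact hv)]
    exact heq
  rw [topImage, Finset.mem_image]
  exact ⟨⟨v, hvm⟩, by simp [hv2], this⟩

lemma mem_pair_of_not_mem_sset {i : Fin n} {γ : Fin (m-1)} (h : γ ∉ sset hm i) :
    γ = bfun hm (i-1) ∨ γ = bfun hm i := by
  simp [sset] at h
  tauto

lemma block_mem_pair (c' : (cycleKminus n m).Coloring (Fin (m-1)))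
    (hS : ∀ v ∈ Sset hn hm, c' v = cstar hn hm v) (i : Fin n) {x : Fin m}
    (hx : (x : ℕ) ≤ 1) :
    c' (i, x) = bfun hm (i-1) ∨ c' (i, x) = bfun hm i :=
  mem_pair_of_not_mem_sset hm
    (fun hmem => not_mem_topImage c' i hx (sset_sub_topImage hn hm c' hS i hmem))

lemma last_mem_pair (c' : (cycleKminus n m).Coloring (Fin (m-1)))
    (hS : ∀ v ∈ Sset hn hm, c' v = cstar hn hm v) (i : Fin n) :
    c' (i, (⟨m-1, by omega⟩ : Fin m)) = bfun hm (i-1) ∨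
    c' (i, (⟨m-1, by omega⟩ : Fin m)) = bfun hm i := by
  apply mem_pair_of_not_mem_sset hm
  intro hmem
  obtain ⟨v, hv2, hv, heq⟩ := midColor_surj hn hm i hmem
  have hvm : v < m := by omega
  have hmemS : (i, (⟨v, hvm⟩ : Fin m)) ∈ Sset hn hm := by
    rw [mem_Sset hn hm]
    exact Or.inl ⟨hv2, hv⟩
  have h1 : c' (i, (⟨v, hvm⟩ : Fin m)) = c' (i, (⟨m-1, by omega⟩ : Fin m)) := by
    rw [hS _ hmemS, cstar_mid hn hm (by exact hv2) (by exact hv)]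
    exact heq
  have hadj : (cycleKminus n m).Adj (i, (⟨v, hvm⟩ : Fin m)) (i, (⟨m-1, by omega⟩ : Fin m)) :=
    adj_same (fun h => by
      have := congrArg Fin.val h
      simp at this
      omega) (Or.inl (by simpa using hv2))
  exact c'.valid hadj h1

end Unique

end CKM

namespace CKM

open Finset

variable {n m : ℕ}

section Unique2

variable [NeZero n] (hn : 2 ≤ n) (hm : 4 ≤ m)

set_option maxHeartbeats 2000000 in
lemma blocks_eq (c' : (cycleKminus n m).Coloring (Fin (m-1)))
    (hS : ∀ v ∈ Sset hn hm, c' v = cstar hn hm v) :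
    ∀ (j : ℕ) (hj : j < n),
      c' ((⟨j, hj⟩ : Fin n), (⟨0, by omega⟩ : Fin m)) = bfun hm ⟨j, hj⟩ ∧
      c' ((⟨j, hj⟩ : Fin n), (⟨m-1, by omega⟩ : Fin m)) = bfun hm (⟨j, hj⟩ - 1) := by
  intro j
  induction j with
  | zero =>
    intro hj
    have h0 : (⟨0, hj⟩ : Fin n) = 0 := by
      apply Fin.ext
      simp
    have hlastS : ((0 : Fin n), (⟨m-1, by omega⟩ : Fin m)) ∈ Sset hn hm := by
      rw [mem_Sset hn hm]
      exact Or.inr rfl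
    have hlast : c' ((0 : Fin n), (⟨m-1, by omega⟩ : Fin m)) = bfun hm ((0 : Fin n) - 1) := by
      rw [hS _ hlastS, cstar_last hn hm (by simp; omega)]
    rw [h0]
    refine ⟨?_, hlast⟩
    rcases block_mem_pair hn hm c' hS (0 : Fin n) (x := ⟨0, by omega⟩) (by simp) with h | h
    · exfalso
      have hadj : (cycleKminus n m).Adj ((0 : Fin n), (⟨0, by omega⟩ : Fin m))
          ((0 : Fin n), (⟨m-1, by omega⟩ : Fin m)) :=
        adj_same (fun hc => by have := congrArg Fin.val hc; simp at this; omega)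
          (Or.inr (by simp; omega))
      exact c'.valid hadj (by rw [h, hlast])
    · exact h
  | succ p ih =>
    intro hj
    have hp : p < n := by omega
    obtain ⟨ihblock, -⟩ := ih hp
    have hsucc : (⟨p+1, hj⟩ : Fin n) = ⟨p, hp⟩ + 1 := by
      apply Fin.ext
      rw [val_add_one hn]
      simp [Nat.mod_eq_of_lt hj]
    have hpred : (⟨p+1, hj⟩ : Fin n) - 1 = ⟨p, hp⟩ := by
      rw [hsucc, add_sub_cancel_right]
    -- the block of copy p+1
    have hb1 : c' ((⟨p+1, hj⟩ : Fin n), (⟨0, by omega⟩ : Fin m)) = bfun hm ⟨p+1, hj⟩ := by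
      rcases block_mem_pair hn hm c' hS ⟨p+1, hj⟩ (x := ⟨0, by omega⟩) (by simp) with h | h
      · exfalso
        -- c' (p,1) = c' (p,0) = bfun p ; adjacent to (p+1, 0)
        have hblk : c' ((⟨p, hp⟩ : Fin n), (⟨1, by omega⟩ : Fin m))
            = c' ((⟨p, hp⟩ : Fin n), (⟨0, by omega⟩ : Fin m)) :=
          block_eq hm c' _ (by simp) (by simp)
        have hadj : (cycleKminus n m).Adj ((⟨p, hp⟩ : Fin n), (⟨1, by omega⟩ : Fin m))
            ((⟨p, hp⟩ + 1 : Fin n), (⟨0, by omega⟩ : Fin m)) :=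
          adj_cross hn _ (by simp) (by simp)
        rw [← hsucc] at hadj
        apply c'.valid hadj
        rw [hblk, ihblock, h, hpred]
      · exact h
    refine ⟨hb1, ?_⟩
    rcases last_mem_pair hn hm c' hS ⟨p+1, hj⟩ with h | h
    · rw [h, hpred]
    · exfalso
      have hadj : (cycleKminus n m).Adj ((⟨p+1, hj⟩ : Fin n), (⟨m-1, by omega⟩ : Fin m))
          ((⟨p+1, hj⟩ : Fin n), (⟨0, by omega⟩ : Fin m)) :=
        adj_same (fun hc => by have := congrArg Fin.val hc; simp at this; omega)
          (Or.inl (by simp; omega))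
      exact c'.valid hadj (by rw [h, hb1])

lemma agree_eq_cstar (c' : (cycleKminus n m).Coloring (Fin (m-1)))
    (hS : ∀ v ∈ Sset hn hm, c' v = cstar hn hm v) :
    ∀ x, c' x = cstar hn hm x := by
  rintro ⟨i, a⟩
  obtain ⟨j, hj, rfl⟩ : ∃ (j : ℕ) (hj : j < n), i = ⟨j, hj⟩ := ⟨i.1, i.isLt, rfl⟩
  obtain ⟨hblock, hlast⟩ := blocks_eq hn hm c' hS j hj
  by_cases ha1 : (a : ℕ) ≤ 1
  · have h1 : c' (⟨j, hj⟩, a) = c' ((⟨j, hj⟩ : Fin n), (⟨0, by omega⟩ : Fin m)) :=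
      block_eq hm c' _ ha1 (by simp)
    rw [h1, hblock, cstar_low hn hm ha1]
  · by_cases ha2 : (a : ℕ) ≤ m - 2
    · exact hS _ (by rw [mem_Sset hn hm]; exact Or.inl ⟨(by omega : 2 ≤ (a : ℕ)), ha2⟩)
    · have haval : a = (⟨m-1, by omega⟩ : Fin m) := by
        apply Fin.ext
        show (a : ℕ) = m - 1
        have := a.isLt
        omega
      rw [haval, hlast, cstar_last hn hm (show m - 2 < ((⟨m-1, by omega⟩ : Fin m) : ℕ) from by show m - 2 < m - 1; omega)]

end Unique2

end CKM


namespace CKM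

variable {n : ℕ}

open scoped Fin.NatCast Fin.CommRing

lemma cast_eq_cast' [NeZero n] {a c : ℕ} (h : a % n = c % n) :
    ((a : Fin n)) = (c : Fin n) := by
  apply Fin.ext
  rw [Fin.val_natCast, Fin.val_natCast, h]

lemma cast_succ [NeZero n] (t : Fin n) (j : ℕ) :
    t + ((j + 1 : ℕ) : Fin n) = t + (j : Fin n) + 1 := by
  push_cast
  ring

lemma run_or_wrap [NeZero n] (hn : 2 ≤ n) {α : Type*} (b o : Fin n → α)
    (hbo : ∀ i, b i ≠ o i) (hb : ∀ i, b i ≠ b (i + 1)) (t : Fin n)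
    (ht : o t = o (t + 1)) :
    (∃ b' : Fin n → α, b' ≠ b ∧ (∀ i, b' i = b i ∨ b' i = o i) ∧ ∀ i, b' i ≠ b' (i + 1)) ∨
    (∀ j : ℕ, 1 ≤ j → j < n → o (t + (j : Fin n)) = b (t + (j : Fin n) + 1)) := by
  classical
  have hQn : 1 ≤ n ∧ o (t + ((n : ℕ) : Fin n)) ≠ b (t + ((n : ℕ) : Fin n) + 1) := by
    refine ⟨by omega, ?_⟩
    rw [Fin.natCast_self, add_zero, ht]
    exact (hbo (t + 1)).symm
  have hex : ∃ j : ℕ, 1 ≤ j ∧ o (t + (j : Fin n)) ≠ b (t + (j : Fin n) + 1) := ⟨n, hQn⟩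
  set j₀ := Nat.find hex with hj₀def
  have hQj₀ := Nat.find_spec hex
  have hj₀n : j₀ ≤ n := Nat.find_le hQn
  have hq1 : 1 ≤ j₀ := hQj₀.1
  have hmin : ∀ j, 1 ≤ j → j < j₀ → o (t + (j : Fin n)) = b (t + (j : Fin n) + 1) := by
    intro j h1 hlt
    have h2 := Nat.find_min hex hlt
    push_neg at h2
    exact h2 h1
  rcases Nat.lt_or_ge j₀ n with hlt | hge
  swap
  · exact Or.inr fun j h1 hjn => hmin j h1 (by omega)
  left
  refine ⟨fun s => if ∃ j : ℕ, 1 ≤ j ∧ j ≤ j₀ ∧ s = t + (j : Fin n) then o s else b s,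
    ?_, ?_, ?_⟩
  · intro h
    have h1 := congrFun h (t + ((1 : ℕ) : Fin n))
    rw [if_pos ⟨1, le_rfl, hq1, rfl⟩] at h1
    exact hbo _ h1.symm
  · intro i
    dsimp only
    split
    · exact Or.inr rfl
    · exact Or.inl rfl
  · intro s
    dsimp only
    by_cases hsT : ∃ j : ℕ, 1 ≤ j ∧ j ≤ j₀ ∧ s = t + (j : Fin n) <;>
      by_cases hs1T : ∃ j : ℕ, 1 ≤ j ∧ j ≤ j₀ ∧ s + 1 = t + (j : Fin n)
    · rw [if_pos hsT, if_pos hs1T]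
      obtain ⟨j, hj1, hjj₀, rfl⟩ := hsT
      obtain ⟨j', hj1', hjj₀', he'⟩ := hs1T
      have hthis : t + ((j + 1 : ℕ) : Fin n) = t + (j' : Fin n) := by
        rw [cast_succ, he']
      have hj'n : j' < n := by omega
      have hmod : (j + 1) % n = j' % n := by
        have h2 := add_left_cancel hthis
        have h3 := congrArg Fin.val h2
        rwa [Fin.val_natCast, Fin.val_natCast] at h3
      have hj'j : j' = j + 1 := by
        rcases Nat.lt_or_ge (j + 1) n with h | h
        · rw [Nat.mod_eq_of_lt h, Nat.mod_eq_of_lt hj'n] at hmod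
          omega
        · have h4 : j + 1 = n := by omega
          rw [h4, Nat.mod_self, Nat.mod_eq_of_lt hj'n] at hmod
          omega
      have hjlt : j < j₀ := by omega
      rw [hmin j hj1 hjlt, he', hj'j, cast_succ]
      exact hbo _
    · rw [if_pos hsT, if_neg hs1T]
      obtain ⟨j, hj1, hjj₀, rfl⟩ := hsT
      have hjj : j = j₀ := by
        by_contra hne
        exact hs1T ⟨j + 1, by omega, by omega, (cast_succ t j).symm⟩
      subst hjj
      exact hQj₀.2
    · rw [if_neg hsT, if_pos hs1T]
      obtain ⟨j', hj1', hjj₀', he'⟩ := hs1T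
      have hj'1 : j' = 1 := by
        by_contra hne
        apply hsT
        refine ⟨j' - 1, by omega, by omega, ?_⟩
        have h2 : t + ((j' : ℕ) : Fin n) = (t + ((j' - 1 : ℕ) : Fin n)) + 1 := by
          have h3 := cast_succ t (j' - 1)
          rw [show j' - 1 + 1 = j' from by omega] at h3
          exact h3
        have h4 : s + 1 = (t + ((j' - 1 : ℕ) : Fin n)) + 1 := by rw [he', h2]
        exact add_right_cancel h4
      subst hj'1
      have hst : s = t := by
        have h5 : s + 1 = t + 1 := by rw [he', Nat.cast_one]
        exact add_right_cancel h5
      rw [hst, ← ht]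
      exact hbo t
    · rw [if_neg hsT, if_neg hs1T]
      exact hb s

end CKM

namespace CKM

variable {n : ℕ}

open scoped Fin.NatCast Fin.CommRing

lemma two_list_cycle [NeZero n] (hn : 2 ≤ n) {α : Type*} (b o : Fin n → α)
    (hbo : ∀ i, b i ≠ o i) (hb : ∀ i, b i ≠ b (i + 1)) :
    ∃ b' : Fin n → α, b' ≠ b ∧ (∀ i, b' i = b i ∨ b' i = o i) ∧ ∀ i, b' i ≠ b' (i + 1) := by
  by_cases hflip : ∀ s : Fin n, o s ≠ o (s + 1)
  · exact ⟨o, fun h => hbo 0 (congrFun h 0).symm, fun i => Or.inr rfl, hflip⟩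
  push_neg at hflip
  obtain ⟨t, ht⟩ := hflip
  rcases run_or_wrap hn b o hbo hb t ht with ⟨b', h⟩ | hR
  · exact ⟨b', h⟩
  have hbo' : ∀ i : Fin n, b (-i) ≠ o (-i) := fun i => hbo (-i)
  have hb' : ∀ i : Fin n, b (-i) ≠ b (-(i + 1)) := by
    intro i
    have h1 := hb (-i - 1)
    rw [show -i - 1 + 1 = -i by ring] at h1
    rw [show -(i + 1) = -i - 1 by ring]
    exact h1.symm
  have ht' : o (-(-(t + 1) : Fin n)) = o (-(-(t + 1) + 1) : Fin n) := by
    rw [neg_neg, show -(-(t + 1) + 1) = t by ring]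
    exact ht.symm
  rcases run_or_wrap hn (fun s => b (-s)) (fun s => o (-s)) hbo' hb' (-(t + 1)) ht'
    with ⟨b'', hne, hmem, hedge⟩ | hL
  · refine ⟨fun s => b'' (-s), ?_, ?_, ?_⟩
    · intro h
      apply hne
      funext i
      have h2 := congrFun h (-i)
      rw [neg_neg] at h2
      exact h2
    · intro i
      rcases hmem (-i) with h | h <;> rw [neg_neg] at h
      · exact Or.inl h
      · exact Or.inr h
    · intro i
      have h3 := hedge (-(i + 1))
      rw [show -(i + 1) + 1 = -i by ring] at h3
      exact h3.symm
  · exfalso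
    have hL' : ∀ j : ℕ, 1 ≤ j → j < n → o (t + 1 - (j : Fin n)) = b (t - (j : Fin n)) := by
      intro j h1 h2
      have h3 := hL j h1 h2
      rw [show -(-(t + 1) + (j : Fin n)) = t + 1 - (j : Fin n) by ring,
        show -(-(t + 1) + (j : Fin n) + 1) = t - (j : Fin n) by ring] at h3
      exact h3
    -- the alternating-blocks claim
    have claim : ∀ k : ℕ, 1 ≤ k → k ≤ n →
        b (t + (k : Fin n)) =
          if k % 2 = 1 then b (t + ((1 : ℕ) : Fin n)) else b (t + ((2 : ℕ) : Fin n)) := by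
      intro k
      induction k using Nat.strong_induction_on with
      | _ k ih =>
        intro hk1 hkn
        rcases Nat.lt_or_ge k 3 with h3 | h3
        · interval_cases k
          · rw [if_pos (by omega)]
          · rw [if_neg (by omega)]
        · have h1 : b (t + (k : Fin n)) = o (t + ((k - 1 : ℕ) : Fin n)) := by
            have h4 := hR (k - 1) (by omega) (by omega)
            rw [← cast_succ, show k - 1 + 1 = k from by omega] at h4
            exact h4.symm
          have h2 : o (t + ((k - 1 : ℕ) : Fin n)) = b (t + ((k - 2 : ℕ) : Fin n)) := by
            have h5 := hL' (n + 2 - k) (by omega) (by omega)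
            have e1 : t + 1 - ((n + 2 - k : ℕ) : Fin n) = t + ((k - 1 : ℕ) : Fin n) := by
              have e0 : ((k - 1 : ℕ) : Fin n) + ((n + 2 - k : ℕ) : Fin n) = 1 := by
                rw [← Nat.cast_add, show k - 1 + (n + 2 - k) = n + 1 from by omega,
                  cast_eq_cast' (Nat.add_mod_left n 1), Nat.cast_one]
              rw [sub_eq_iff_eq_add, add_assoc, e0]
            have e2 : t - ((n + 2 - k : ℕ) : Fin n) = t + ((k - 2 : ℕ) : Fin n) := by
              have e0 : ((k - 2 : ℕ) : Fin n) + ((n + 2 - k : ℕ) : Fin n) = 0 := by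
                rw [← Nat.cast_add, show k - 2 + (n + 2 - k) = n from by omega,
                  Fin.natCast_self]
              rw [sub_eq_iff_eq_add, add_assoc, e0, add_zero]
            rw [e1, e2] at h5
            exact h5
          have h6 := ih (k - 2) (by omega) (by omega) (by omega)
          rw [h1, h2, h6, show (k - 2) % 2 = k % 2 from by omega]
    rcases Nat.even_or_odd n with he | ho
    · -- n even
      have hpar : n % 2 = 0 := Nat.even_iff.mp he
      have hc := claim (n - 1) (by omega) (by omega)
      rw [if_pos (by omega), Nat.cast_one] at hc
      have e3 : t + ((n - 1 : ℕ) : Fin n) = t - 1 := by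
        have e0 : ((n - 1 : ℕ) : Fin n) + 1 = 0 := by
          rw [← Nat.cast_one (R := Fin n), ← Nat.cast_add, show n - 1 + 1 = n from by omega,
            Fin.natCast_self]
        rw [eq_sub_iff_add_eq, add_assoc, e0, add_zero]
      have hL1 := hL' 1 le_rfl (by omega)
      rw [Nat.cast_one, add_sub_cancel_right] at hL1
      have hR1 := hR 1 le_rfl (by omega)
      rw [Nat.cast_one] at hR1
      apply hb (t + 1)
      rw [← hR1, ← ht, hL1, ← e3, hc]
    · -- n odd
      have hpar : n % 2 = 1 := Nat.odd_iff.mp ho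
      have hc := claim n (by omega) le_rfl
      rw [if_pos (by omega), Fin.natCast_self, add_zero, Nat.cast_one] at hc
      exact hb t hc

end CKM


namespace CKM

variable {n m : ℕ}


open Finset

variable {n m : ℕ}

/-- The transposition of two top vertices `(i,u)` and `(i,w)`. -/
def pe (i : Fin n) (u w : Fin m) : Fin n × Fin m → Fin n × Fin m := fun x =>
  if x = (i, u) then (i, w) else if x = (i, w) then (i, u) else x

lemma pe_fst (i : Fin n) (u w : Fin m) (x : Fin n × Fin m) : (pe i u w x).1 = x.1 := by
  rw [pe]
  split_ifs with h1 h2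
  · rw [h1]
  · rw [h2]
  · rfl

lemma pe_invol (i : Fin n) {u w : Fin m} (huw : u ≠ w) (x : Fin n × Fin m) :
    pe i u w (pe i u w x) = x := by
  rw [pe, pe]
  split_ifs with h1 h2 <;>
    simp_all [Prod.ext_iff] <;> tauto

lemma pe_inj (i : Fin n) {u w : Fin m} (huw : u ≠ w) {x y : Fin n × Fin m}
    (h : pe i u w x = pe i u w y) : x = y := by
  have := congrArg (pe i u w) h
  rwa [pe_invol i huw, pe_invol i huw] at this

lemma pe_snd_ge (i : Fin n) {u w : Fin m} (hu : 2 ≤ (u : ℕ)) (hw : 2 ≤ (w : ℕ))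
    (x : Fin n × Fin m) : 2 ≤ ((pe i u w x).2 : ℕ) ↔ 2 ≤ ((x.2) : ℕ) := by
  rw [pe]
  split_ifs with h1 h2
  · simp only [h1]
    exact ⟨fun _ => hu, fun _ => hw⟩
  · simp only [h2]
    exact ⟨fun _ => hw, fun _ => hu⟩
  · rfl

lemma pe_snd_low (i : Fin n) {u w : Fin m} (hu : 2 ≤ (u : ℕ)) (hw : 2 ≤ (w : ℕ))
    (x : Fin n × Fin m) (hx : ((x.2) : ℕ) ≤ 1) : pe i u w x = x := by
  rw [pe, if_neg, if_neg]
  · intro h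
    rw [h] at hx
    simp at hx
    omega
  · intro h
    rw [h] at hx
    simp at hx
    omega

lemma pe_adj (hn : 2 ≤ n) (i : Fin n) {u w : Fin m} (huw : u ≠ w)
    (hu : 2 ≤ (u : ℕ)) (hw : 2 ≤ (w : ℕ)) {x y : Fin n × Fin m}
    (h : (cycleKminus n m).Adj x y) :
    (cycleKminus n m).Adj (pe i u w x) (pe i u w y) := by
  have hx : x = (x.1, x.2) := rfl
  have hy : y = (y.1, y.2) := rfl
  rw [hx, hy] at h
  rcases adj_iff'.1 h with ⟨h1, h2, h3⟩ | ⟨h1, h2, h3⟩ | ⟨h1, h2, h3⟩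
  · have hfst : (pe i u w x).1 = (pe i u w y).1 := by
      rw [pe_fst, pe_fst, h1]
    have hsnd : (pe i u w x).2 ≠ (pe i u w y).2 := by
      intro hc
      apply h2
      have : pe i u w x = pe i u w y := Prod.ext hfst hc
      have := pe_inj i huw this
      rw [this]
    have hge : 2 ≤ ((pe i u w x).2 : ℕ) ∨ 2 ≤ ((pe i u w y).2 : ℕ) := by
      rw [pe_snd_ge i hu hw, pe_snd_ge i hu hw]
      exact h3
    exact adj_iff'.2 (Or.inl ⟨hfst, hsnd, hge⟩)
  · have hex : pe i u w x = x := pe_snd_low i hu hw x (by omega)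
    have hey : pe i u w y = y := pe_snd_low i hu hw y (by omega)
    rw [hex, hey]
    exact h
  · have hex : pe i u w x = x := pe_snd_low i hu hw x (by omega)
    have hey : pe i u w y = y := pe_snd_low i hu hw y (by omega)
    rw [hex, hey]
    exact h

/-- The coloring obtained by swapping two top vertices of a copy. -/
def swapColoring (hn : 2 ≤ n) (c : (cycleKminus n m).Coloring (Fin (m-1)))
    (i : Fin n) {u w : Fin m} (huw : u ≠ w) (hu : 2 ≤ (u : ℕ)) (hw : 2 ≤ (w : ℕ)) :
    (cycleKminus n m).Coloring (Fin (m-1)) :=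
  Coloring.mk (fun x => c (pe i u w x))
    (fun hadj => c.valid (pe_adj hn i huw hu hw hadj))



lemma used_card_eq (S : Finset (Fin n × Fin m)) (i : Fin n) :
    (Finset.univ.filter fun a : Fin m => 2 ≤ (a : ℕ) ∧ (i, a) ∈ S).card
      = (S.filter fun x => x.1 = i ∧ 2 ≤ ((x.2) : ℕ)).card := by
  refine Finset.card_bij (fun (a : Fin m) _ => (i, a)) ?_ ?_ ?_
  · intro a ha
    rw [Finset.mem_filter] at ha ⊢
    exact ⟨ha.2.2, rfl, ha.2.1⟩
  · intro a _ b _ hab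
    exact congrArg Prod.snd hab
  · intro x hx
    rw [Finset.mem_filter] at hx
    refine ⟨x.2, ?_, Prod.ext hx.2.1.symm rfl⟩
    rw [Finset.mem_filter]
    refine ⟨Finset.mem_univ _, hx.2.2, ?_⟩
    rw [show (i, x.2) = x from Prod.ext hx.2.1.symm rfl]
    exact hx.1

lemma stepA [NeZero n] (hn : 2 ≤ n) (hm : 4 ≤ m) (S : Finset (Fin n × Fin m))
    (c : (cycleKminus n m).Coloring (Fin (m-1)))
    (hu2 : ∀ c' : (cycleKminus n m).Coloring (Fin (m-1)),
      (∀ v ∈ S, c' v = c v) → c' = c)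
    (i : Fin n) : m - 3 ≤ (S.filter fun x => x.1 = i ∧ 2 ≤ ((x.2) : ℕ)).card := by
  by_contra hlt
  push_neg at hlt
  have hsplit : (Finset.univ.filter fun a : Fin m => 2 ≤ (a : ℕ)) ⊆
      (Finset.univ.filter fun a : Fin m => 2 ≤ (a : ℕ) ∧ (i, a) ∉ S)
        ∪ (Finset.univ.filter fun a : Fin m => 2 ≤ (a : ℕ) ∧ (i, a) ∈ S) := by
    intro a ha
    rw [Finset.mem_filter] at ha
    rw [Finset.mem_union, Finset.mem_filter, Finset.mem_filter]
    by_cases hmem : (i, a) ∈ S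
    · exact Or.inr ⟨Finset.mem_univ _, ha.2, hmem⟩
    · exact Or.inl ⟨Finset.mem_univ _, ha.2, hmem⟩
  have hcards := Finset.card_le_card hsplit
  rw [card_val_ge] at hcards
  have hcard2 := Finset.card_union_le
    (Finset.univ.filter fun a : Fin m => 2 ≤ (a : ℕ) ∧ (i, a) ∉ S)
    (Finset.univ.filter fun a : Fin m => 2 ≤ (a : ℕ) ∧ (i, a) ∈ S)
  have husedc := used_card_eq S i
  have h2F : 1 < (Finset.univ.filter fun a : Fin m => 2 ≤ (a : ℕ) ∧ (i, a) ∉ S).card := by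
    omega
  obtain ⟨u, hu, w, hw, huw⟩ := Finset.one_lt_card.mp h2F
  rw [Finset.mem_filter] at hu hw
  have hagree : ∀ v ∈ S, (swapColoring hn c i huw hu.2.1 hw.2.1) v = c v := by
    intro v hv
    show c (pe i u w v) = c v
    rw [pe, if_neg (fun h => hu.2.2 (by rw [← h]; exact hv)),
      if_neg (fun h => hw.2.2 (by rw [← h]; exact hv))]
  have hcc := hu2 _ hagree
  have heval := DFunLike.congr_fun hcc (i, u)
  have hpe : pe i u w (i, u) = (i, w) := if_pos rfl
  have heval2 : c (i, w) = c (i, u) := by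
    rw [← hpe]
    exact heval
  exact c.valid (adj_same huw (Or.inl hu.2.1)) heval2.symm

set_option maxHeartbeats 3200000 in
lemma lower_bound [NeZero n] (hn : 2 ≤ n) (hm : 4 ≤ m) (S : Finset (Fin n × Fin m))
    (C₀ : Fin n × Fin m → Fin (m-1))
    (h : IsSudokuColoring (cycleKminus n m) (m-1) S C₀) :
    (m-3) * n + 1 ≤ S.card := by
  classical
  obtain ⟨c, hc, huniq⟩ := h
  have hu2 : ∀ c' : (cycleKminus n m).Coloring (Fin (m-1)),
      (∀ v ∈ S, c' v = c v) → c' = c := by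
    intro c' h'
    exact huniq c' (fun v hv => (h' v hv).trans (hc v hv))
  by_contra hgoal
  push_neg at hgoal
  have hcard : S.card ≤ (m-3) * n := by omega
  have hA := stepA hn hm S c hu2
  have hsum : S.card = ∑ i : Fin n, (S.filter fun x => x.1 = i).card :=
    Finset.card_eq_sum_card_fiberwise (fun x _ => Finset.mem_univ _)
  have key : ∀ (f : Fin n → ℕ) (i₀ : Fin n), (∀ i, m - 3 ≤ f i) → m - 2 ≤ f i₀ →
      (m-3) * n + 1 ≤ ∑ i : Fin n, f i := by
    intro f i₀ hall hone
    have h1 : ∀ i ∈ Finset.univ, (m - 3) + (if i = i₀ then 1 else 0) ≤ f i := by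
      intro i _
      split_ifs with hii
      · subst hii; omega
      · have := hall i; omega
    calc (m-3) * n + 1
        = ∑ i : Fin n, ((m-3) + if i = i₀ then 1 else 0) := by
          rw [Finset.sum_add_distrib, Finset.sum_const, Finset.card_univ, Fintype.card_fin,
            smul_eq_mul, Finset.sum_ite_eq' Finset.univ i₀ (fun _ => 1),
            if_pos (Finset.mem_univ _), Nat.mul_comm]
      _ ≤ ∑ i : Fin n, f i := Finset.sum_le_sum h1
  have hfible : ∀ i : Fin n, (S.filter fun x => x.1 = i ∧ 2 ≤ ((x.2) : ℕ)).card
      ≤ (S.filter fun x => x.1 = i).card := by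
    intro i
    apply Finset.card_le_card
    intro x hx
    rw [Finset.mem_filter] at hx ⊢
    exact ⟨hx.1, hx.2.1⟩
  have hlow : ∀ x ∈ S, 2 ≤ ((x.2) : ℕ) := by
    by_contra hex
    push_neg at hex
    obtain ⟨x, hxS, hx1⟩ := hex
    have hfibx : m - 2 ≤ (S.filter fun y => y.1 = x.1).card := by
      have hxnot : x ∉ S.filter fun y => y.1 = x.1 ∧ 2 ≤ ((y.2) : ℕ) := by
        rw [Finset.mem_filter]
        rintro ⟨-, -, h2⟩
        omega
      have hins : insert x (S.filter fun y => y.1 = x.1 ∧ 2 ≤ ((y.2) : ℕ))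
          ⊆ S.filter fun y => y.1 = x.1 := by
        intro y hy
        rw [Finset.mem_insert] at hy
        rcases hy with rfl | hy
        · rw [Finset.mem_filter]; exact ⟨hxS, rfl⟩
        · rw [Finset.mem_filter] at hy ⊢; exact ⟨hy.1, hy.2.1⟩
      have hle := Finset.card_le_card hins
      rw [Finset.card_insert_of_notMem hxnot] at hle
      have := hA x.1
      omega
    have hge : (m-3) * n + 1 ≤ ∑ i : Fin n, (S.filter fun x => x.1 = i).card :=
      key (fun i => (S.filter fun y => y.1 = i).card) x.1
        (fun i => le_trans (hA i) (hfible i)) hfibx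
    omega
  have hfib_eq : ∀ i : Fin n, (S.filter fun x => x.1 = i)
      = S.filter fun x => x.1 = i ∧ 2 ≤ ((x.2) : ℕ) := by
    intro i
    ext x
    rw [Finset.mem_filter, Finset.mem_filter]
    constructor
    · rintro ⟨h1, h2⟩; exact ⟨h1, h2, hlow x h1⟩
    · rintro ⟨h1, h2, -⟩; exact ⟨h1, h2⟩
  have hsum2 : S.card = ∑ i : Fin n, (S.filter fun x => x.1 = i ∧ 2 ≤ ((x.2) : ℕ)).card := by
    rw [hsum]
    exact Finset.sum_congr rfl (fun i _ => by rw [hfib_eq i])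
  have hall : ∀ i : Fin n, (S.filter fun x => x.1 = i ∧ 2 ≤ ((x.2) : ℕ)).card = m - 3 := by
    by_contra hex
    push_neg at hex
    obtain ⟨i₀, hi₀⟩ := hex
    have h1 : m - 2 ≤ (S.filter fun x => x.1 = i₀ ∧ 2 ≤ ((x.2) : ℕ)).card := by
      have := hA i₀; omega
    have hge : (m-3) * n + 1 ≤ ∑ i : Fin n,
        (S.filter fun x => x.1 = i ∧ 2 ≤ ((x.2) : ℕ)).card := key _ i₀ hA h1
    omega
  have hFone : ∀ i : Fin n, ∃ a : Fin m,
      (Finset.univ.filter fun a : Fin m => 2 ≤ (a : ℕ) ∧ (i, a) ∉ S) = {a} := by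
    intro i
    apply Finset.card_eq_one.mp
    have hdisj : Disjoint (Finset.univ.filter fun a : Fin m => 2 ≤ (a : ℕ) ∧ (i, a) ∉ S)
        (Finset.univ.filter fun a : Fin m => 2 ≤ (a : ℕ) ∧ (i, a) ∈ S) := by
      rw [Finset.disjoint_left]
      intro a ha hb
      rw [Finset.mem_filter] at ha hb
      exact ha.2.2 hb.2.2
    have hunion : (Finset.univ.filter fun a : Fin m => 2 ≤ (a : ℕ) ∧ (i, a) ∉ S)
        ∪ (Finset.univ.filter fun a : Fin m => 2 ≤ (a : ℕ) ∧ (i, a) ∈ S)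
        = Finset.univ.filter fun a : Fin m => 2 ≤ (a : ℕ) := by
      ext a
      rw [Finset.mem_union, Finset.mem_filter, Finset.mem_filter, Finset.mem_filter]
      by_cases hmem : (i, a) ∈ S <;> simp [hmem]
    have hcu := Finset.card_union_of_disjoint hdisj
    rw [hunion, card_val_ge, used_card_eq S i, hall i] at hcu
    omega
  choose v hv using hFone
  have hvmem : ∀ i : Fin n, v i ∈ (Finset.univ.filter
      fun a : Fin m => 2 ≤ (a : ℕ) ∧ (i, a) ∉ S) := by
    intro i; rw [hv i]; exact Finset.mem_singleton_self _
  have hv2 : ∀ i, 2 ≤ ((v i) : ℕ) := fun i => (Finset.mem_filter.mp (hvmem i)).2.1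
  have hvS : ∀ i, (i, v i) ∉ S := fun i => (Finset.mem_filter.mp (hvmem i)).2.2
  have hvuniq : ∀ (i : Fin n) (a : Fin m), 2 ≤ (a : ℕ) → (i, a) ∉ S → a = v i := by
    intro i a h1 h2
    have hmem : a ∈ (Finset.univ.filter fun a : Fin m => 2 ≤ (a : ℕ) ∧ (i, a) ∉ S) := by
      rw [Finset.mem_filter]; exact ⟨Finset.mem_univ _, h1, h2⟩
    rw [hv i, Finset.mem_singleton] at hmem
    exact hmem
  set bb : Fin n → Fin (m-1) := fun i => c (i, (⟨0, by omega⟩ : Fin m)) with hbbdef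
  set oo : Fin n → Fin (m-1) := fun i => c (i, v i) with hoodef
  have hboo : ∀ i, bb i ≠ oo i := by
    intro i
    apply c.valid (adj_same (a := (⟨0, by omega⟩ : Fin m)) (b := v i) ?_ (Or.inr (hv2 i)))
    intro hc0
    have h0 := congrArg Fin.val hc0
    have h1 := hv2 i
    simp at h0
    omega
  have hbbp : ∀ i, bb i ≠ bb (i + 1) := by
    intro i
    have h01 : c (i, (⟨1, by omega⟩ : Fin m)) = c (i, (⟨0, by omega⟩ : Fin m)) :=
      block_eq hm c i (by simp) (by simp)
    have hcr := c.valid (adj_cross hn i (a := (⟨1, by omega⟩ : Fin m))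
      (b := (⟨0, by omega⟩ : Fin m)) (by simp) (by simp))
    rw [h01] at hcr
    exact hcr
  obtain ⟨b', hb'ne, hb'mem, hb'edge⟩ := two_list_cycle hn bb oo hboo hbbp
  set other : Fin n → Fin (m-1) := fun i => if b' i = bb i then oo i else bb i with hotherdef
  have hother_ne : ∀ i, other i ≠ b' i := by
    intro i
    rw [hotherdef]
    dsimp only
    split_ifs with hsp
    · rw [hsp]; exact (hboo i).symm
    · exact fun hh => hsp hh.symm
  have hother_mem : ∀ i, other i = bb i ∨ other i = oo i := by
    intro i
    rw [hotherdef]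
    dsimp only
    split_ifs
    · exact Or.inr rfl
    · exact Or.inl rfl
  have hSne : ∀ (i : Fin n) (a : Fin m), 2 ≤ (a : ℕ) → (i, a) ∈ S →
      c (i, a) ≠ bb i ∧ c (i, a) ≠ oo i := by
    intro i a h2 hmem
    constructor
    · exact c.valid (adj_same (a := a) (b := (⟨0, by omega⟩ : Fin m))
        (fun hh => by have := congrArg Fin.val hh; simp at this; omega) (Or.inl h2))
    · have hav : a ≠ v i := fun hh => hvS i (hh ▸ hmem)
      exact c.valid (adj_same hav (Or.inl h2))
  set cnew : Fin n × Fin m → Fin (m-1) := fun x =>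
    if ((x.2) : ℕ) ≤ 1 then b' x.1 else if x.2 = v x.1 then other x.1 else c x with hcnewdef
  have hcnew1 : ∀ (i : Fin n) (a b : Fin m), a ≠ b → 2 ≤ (a : ℕ) ∨ 2 ≤ (b : ℕ) →
      cnew (i, a) ≠ cnew (i, b) := by
    intro i a b hab hge
    rw [hcnewdef]
    dsimp only
    by_cases ha1 : (a : ℕ) ≤ 1 <;> by_cases hb1 : (b : ℕ) ≤ 1
    · omega
    · rw [if_pos ha1, if_neg hb1]
      split_ifs with hbv
      · exact (hother_ne i).symm
      · have hbS : (i, b) ∈ S := by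
          by_contra hns
          exact hbv (hvuniq i b (by omega) hns)
        rcases hb'mem i with hsp | hsp
        · rw [hsp]; exact ((hSne i b (by omega) hbS).1).symm
        · rw [hsp]; exact ((hSne i b (by omega) hbS).2).symm
    · rw [if_neg ha1, if_pos hb1]
      split_ifs with hav
      · exact hother_ne i
      · have haS : (i, a) ∈ S := by
          by_contra hns
          exact hav (hvuniq i a (by omega) hns)
        rcases hb'mem i with hsp | hsp
        · rw [hsp]; exact (hSne i a (by omega) haS).1
        · rw [hsp]; exact (hSne i a (by omega) haS).2
    · rw [if_neg ha1, if_neg hb1]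
      by_cases hav : a = v i <;> by_cases hbv : b = v i
      · exact absurd (hav.trans hbv.symm) hab
      · rw [if_pos hav, if_neg hbv]
        have hbS : (i, b) ∈ S := by
          by_contra hns
          exact hbv (hvuniq i b (by omega) hns)
        rcases hother_mem i with hsp | hsp
        · rw [hsp]; exact ((hSne i b (by omega) hbS).1).symm
        · rw [hsp]; exact ((hSne i b (by omega) hbS).2).symm
      · rw [if_neg hav, if_pos hbv]
        have haS : (i, a) ∈ S := by
          by_contra hns
          exact hav (hvuniq i a (by omega) hns)
        rcases hother_mem i with hsp | hsp
        · rw [hsp]; exact (hSne i a (by omega) haS).1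
        · rw [hsp]; exact (hSne i a (by omega) haS).2
      · rw [if_neg hav, if_neg hbv]
        exact c.valid (adj_same hab hge)
  have hcnew2 : ∀ (i : Fin n) (a b : Fin m), (a : ℕ) = 1 → (b : ℕ) = 0 →
      cnew (i, a) ≠ cnew (i + 1, b) := by
    intro i a b ha hb
    rw [hcnewdef]
    dsimp only
    rw [if_pos (by omega), if_pos (by omega)]
    exact hb'edge i
  have hccS : ∀ x ∈ S, (mkColoring hn cnew hcnew1 hcnew2) x = c x := by
    intro x hx
    show cnew x = c x
    rw [hcnewdef]
    dsimp only
    rw [if_neg (by have := hlow x hx; omega), if_neg]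
    intro hxv
    apply hvS x.1
    have hxx : x = (x.1, x.2) := rfl
    rw [← hxv, ← hxx]
    exact hx
  have hcceq := hu2 (mkColoring hn cnew hcnew1 hcnew2) hccS
  obtain ⟨i, hi⟩ := Function.ne_iff.mp hb'ne
  apply hi
  have heval := DFunLike.congr_fun hcceq (i, (⟨0, by omega⟩ : Fin m))
  have hfin : cnew (i, (⟨0, by omega⟩ : Fin m)) = bb i := heval
  simp only [hcnewdef] at hfin
  rw [if_pos (by simp)] at hfin
  exact hfin

theorem main (hn : 2 ≤ n) (hm : 4 ≤ m) :
    sudokuNumber (cycleKminus n m) = (m - 3) * n + 1 := by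
  haveI : NeZero n := ⟨by omega⟩
  have hχ : (cycleKminus n m).chromaticNumber.toNat = m - 1 := chrom_toNat hn hm
  unfold sudokuNumber
  rw [hχ]
  have hmem : (m-3) * n + 1 ∈ {N | ∃ (S : Finset (Fin n × Fin m))
      (C₀ : Fin n × Fin m → Fin (m-1)),
      IsSudokuColoring (cycleKminus n m) (m-1) S C₀ ∧ S.card = N} := by
    refine ⟨Sset hn hm, cstar hn hm, ⟨Cstar hn hm, fun v _ => rfl, ?_⟩, Sset_card hn hm⟩
    intro c' hc'
    apply DFunLike.ext
    exact agree_eq_cstar hn hm c' (fun v hv => hc' v (Finset.mem_coe.mpr hv))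
  apply le_antisymm
  · exact Nat.sInf_le hmem
  · apply le_csInf ⟨_, hmem⟩
    rintro N ⟨S, C₀, hsud, rfl⟩
    exact lower_bound hn hm S C₀ hsud

end CKM




/-- For `n ≥ 2` and `m ≥ 4`, the graph `C_{2n}(K_m^-)` has Sudoku number
`(m - 3)n + 1`. -/
theorem sudokuNumber_cycleKminus (n m : ℕ) (hn : 2 ≤ n) (hm : 4 ≤ m) :
    sudokuNumber (cycleKminus n m) = (m - 3) * n + 1 := by
  exact CKM.main hn hm
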